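/- Let w ∈ ℝ^d be a random vector distributed as a multivariate Gaussian N(0, Σ_w) with covariance Σ_w, and let b be uniformly distributed on [0, 2π) independent of w. Then for any fixed y_i, y_j ∈ ℝ^d, E[2 cos(w^⊤ y_i + b) cos(w^⊤ y_j + b)] = exp(−(1/2)(y_i − y_j)^⊤ Σ_w (y_i − y_j)). -/

import Mathlib

open Matrix MeasureTheory ProbabilityTheory

open scoped Real NNReal ENNReal

/-- The quadratic form `u ↦ u^⊤ S u`. -/
noncomputable def quadForm {d : ℕ} (S : Matrix (Fin d) (Fin d) ℝ) (u : Fin d → ℝ) : ℝ :=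
  ∑ i, ∑ j, u i * S i j * u j

/-- A probability measure on `ℝ^d` is a centered Gaussian with covariance `S` iff every
linear functional `w ↦ u^⊤ w` pushes it forward to the one-dimensional Gaussian
`N(0, u^⊤ S u)`.  -/
def IsCenteredGaussian {d : ℕ} (μ : Measure (Fin d → ℝ))
    (S : Matrix (Fin d) (Fin d) ℝ) : Prop :=
  IsProbabilityMeasure μ ∧
    ∀ u : Fin d → ℝ,
      μ.map (fun w => ∑ i, u i * w i) = gaussianReal 0 (Real.toNNReal (quadForm S u))

lemma integral_cos_gaussianReal_aux (v : ℝ≥0) :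
    ∫ x, Real.cos x ∂(gaussianReal 0 v) = Real.exp (-(v : ℝ) / 2) := by
  by_cases hv : v = 0
  · simp [hv, gaussianReal_zero_var]
  · have hv0 : (0:ℝ) < (v:ℝ) := NNReal.coe_pos.mpr (pos_iff_ne_zero.mpr hv)
    rw [gaussianReal_of_var_ne_zero _ hv]
    have hpdf : gaussianPDF 0 v = fun x => ((gaussianPDFReal 0 v x).toNNReal : ℝ≥0∞) := rfl
    rw [hpdf,
      integral_withDensity_eq_integral_smul
        ((measurable_gaussianPDFReal 0 v).real_toNNReal) Real.cos]
    have h1 : ∀ x : ℝ, (gaussianPDFReal 0 v x).toNNReal • Real.cos x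
        = gaussianPDFReal 0 v x * Real.cos x := by
      intro x
      rw [NNReal.smul_def, Real.coe_toNNReal _ (gaussianPDFReal_nonneg 0 v x), smul_eq_mul]
    simp_rw [h1]
    -- now compute ∫ x, gaussianPDFReal 0 v x * cos x
    set b : ℂ := ((-(1 / (2 * (v:ℝ))) : ℝ) : ℂ) with hbdef
    have hb : b.re < 0 := by
      simp only [b, Complex.ofReal_re]
      rw [neg_lt, neg_zero]
      positivity
    have hre : ∀ x : ℝ, gaussianPDFReal 0 v x * Real.cos x
        = (Real.sqrt (2 * Real.pi * v))⁻¹ *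
          (Complex.exp (b * (x:ℂ)^2 + Complex.I * x + 0)).re := by
      intro x
      rw [gaussianPDFReal_def]
      simp only [Complex.exp_re]
      have him : (b * (x:ℂ)^2 + Complex.I * x + 0).im = x := by
        simp [b, Complex.add_im, Complex.mul_im, ← Complex.ofReal_pow]
      have hrre : (b * (x:ℂ)^2 + Complex.I * x + 0).re = -(1 / (2 * (v:ℝ))) * x^2 := by
        simp [b, Complex.add_re, Complex.mul_re, ← Complex.ofReal_pow]
      rw [him, hrre]
      ring_nf
    simp_rw [hre]
    rw [integral_const_mul]
    simp_rw [← RCLike.re_to_complex]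
    rw [integral_re (integrable_cexp_quadratic' hb Complex.I 0),
      integral_cexp_quadratic hb, RCLike.re_to_complex]
    have h2 : ((0:ℂ) - Complex.I ^ 2 / (4 * b)) = (-(v:ℝ)/2 : ℝ) := by
      rw [Complex.I_sq]
      simp only [b]
      push_cast
      field_simp
      ring
    have h3 : ((Real.pi : ℂ) / -b) ^ (1/2 : ℂ) = (Real.sqrt (2 * Real.pi * v) : ℂ) := by
      have : ((Real.pi : ℂ) / -b) = ((2 * Real.pi * v : ℝ) : ℂ) := by
        simp only [b]
        push_cast
        field_simp
      rw [this, Real.sqrt_eq_rpow, Complex.ofReal_cpow (by positivity)]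
      norm_num
    rw [h2, h3, ← Complex.ofReal_exp, ← Complex.ofReal_mul, Complex.ofReal_re]
    rw [← mul_assoc, inv_mul_cancel₀ (by positivity), one_mul]

/-- For `w ~ N(0, Σ_w)` and `b ~ Uniform[0, 2π)` independent, and fixed `y_i, y_j ∈ ℝ^d`:
`E[2 cos(w^⊤ y_i + b) cos(w^⊤ y_j + b)] = exp(−(1/2)(y_i − y_j)^⊤ Σ_w (y_i − y_j))`. -/
theorem stmt3 {d : ℕ} (Sw : Matrix (Fin d) (Fin d) ℝ) (hS : Sw.PosDef)
    (μ : Measure (Fin d → ℝ)) (hμ : IsCenteredGaussian μ Sw)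
    (yi yj : Fin d → ℝ) :
    ∫ p : (Fin d → ℝ) × ℝ,
        2 * Real.cos ((∑ i, p.1 i * yi i) + p.2) * Real.cos ((∑ i, p.1 i * yj i) + p.2)
        ∂(μ.prod ((ENNReal.ofReal (2 * Real.pi))⁻¹ •
            (volume.restrict (Set.Ico (0 : ℝ) (2 * Real.pi))))) =
      Real.exp (-(1 / 2) * quadForm Sw (yi - yj)) := by
  haveI : IsProbabilityMeasure μ := hμ.1
  have hπ : (0:ℝ) < 2 * Real.pi := by positivity
  set ν : Measure ℝ := (ENNReal.ofReal (2 * Real.pi))⁻¹ •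
      (volume.restrict (Set.Ico (0 : ℝ) (2 * Real.pi))) with hν
  haveI hνprob : IsProbabilityMeasure ν := by
    constructor
    rw [hν, Measure.smul_apply, Measure.restrict_apply MeasurableSet.univ,
      Set.univ_inter, Real.volume_Ico, smul_eq_mul, sub_zero,
      ENNReal.inv_mul_cancel (by simp [hπ, Real.pi_pos]) ENNReal.ofReal_ne_top]
  -- notation
  set T : (Fin d → ℝ) → ℝ := fun w => ∑ i, (yi - yj) i * w i with hT
  set S : (Fin d → ℝ) → ℝ := fun w => ∑ i, w i * (yi i + yj i) with hSdef
  have hTmeas : Measurable T := by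
    apply Finset.measurable_sum
    intro i _
    exact (measurable_pi_apply i).const_mul _
  have hSmeas : Measurable S := by
    apply Finset.measurable_sum
    intro i _
    exact (measurable_pi_apply i).mul_const _
  -- rewrite integrand
  have hrw : (fun p : (Fin d → ℝ) × ℝ =>
      2 * Real.cos ((∑ i, p.1 i * yi i) + p.2) * Real.cos ((∑ i, p.1 i * yj i) + p.2))
      = fun p => Real.cos (T p.1) + Real.cos (S p.1 + 2 * p.2) := by
    funext p
    have h2cos : ∀ A B : ℝ, 2 * Real.cos A * Real.cos B
        = Real.cos (A - B) + Real.cos (A + B) := by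
      intro A B
      rw [Real.cos_sub, Real.cos_add]
      ring
    rw [h2cos]
    congr 1
    · congr 1
      simp only [hT, Pi.sub_apply, sub_mul, Finset.sum_sub_distrib, mul_comm]
      ring
    · congr 1
      simp only [hSdef, mul_add, Finset.sum_add_distrib]
      ring
  rw [hrw]
  have hm1 : AEStronglyMeasurable (fun p : (Fin d → ℝ) × ℝ => Real.cos (T p.1)) (μ.prod ν) :=
    (Real.continuous_cos.measurable.comp (hTmeas.comp measurable_fst)).aestronglyMeasurable
  have hm2 : AEStronglyMeasurable
      (fun p : (Fin d → ℝ) × ℝ => Real.cos (S p.1 + 2 * p.2)) (μ.prod ν) :=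
    (Real.continuous_cos.measurable.comp ((hSmeas.comp measurable_fst).add
      (measurable_snd.const_mul 2))).aestronglyMeasurable
  have hint1 : Integrable (fun p : (Fin d → ℝ) × ℝ => Real.cos (T p.1)) (μ.prod ν) :=
    Integrable.mono' (integrable_const 1) hm1
      (ae_of_all _ fun p => by rw [Real.norm_eq_abs]; exact Real.abs_cos_le_one _)
  have hint2 : Integrable
      (fun p : (Fin d → ℝ) × ℝ => Real.cos (S p.1 + 2 * p.2)) (μ.prod ν) :=
    Integrable.mono' (integrable_const 1) hm2
      (ae_of_all _ fun p => by rw [Real.norm_eq_abs]; exact Real.abs_cos_le_one _)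
  rw [integral_add hint1 hint2]
  have hsec : (∫ p : (Fin d → ℝ) × ℝ, Real.cos (S p.1 + 2 * p.2) ∂(μ.prod ν)) = 0 := by
    rw [integral_prod _ hint2]
    have hinner : ∀ w, (∫ b, Real.cos (S w + 2 * b) ∂ν) = 0 := by
      intro w
      rw [hν, integral_smul_measure]
      have hIco : (∫ b in Set.Ico (0:ℝ) (2*Real.pi), Real.cos (S w + 2*b)) = 0 := by
        rw [MeasureTheory.integral_Ico_eq_integral_Ioo, ← MeasureTheory.integral_Ioc_eq_integral_Ioo,
          ← intervalIntegral.integral_of_le hπ.le]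
        have hc : ∀ b : ℝ, Real.cos (S w + 2*b) = Real.cos (2*b + S w) :=
          fun b => by rw [add_comm]
        simp_rw [hc]
        rw [intervalIntegral.integral_comp_mul_add Real.cos two_ne_zero (S w),
          integral_cos]
        have h4 : 2*(2*Real.pi) + S w = (S w + 2*Real.pi) + 2*Real.pi := by ring
        rw [h4, Real.sin_add_two_pi, Real.sin_add_two_pi]
        norm_num
      rw [hIco]
      simp
    simp_rw [hinner]
    simp
  rw [hsec, add_zero]
  have hfst : (∫ p : (Fin d → ℝ) × ℝ, Real.cos (T p.1) ∂(μ.prod ν))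
      = ∫ w, Real.cos (T w) ∂μ := by
    rw [integral_prod _ hint1]
    simp
  rw [hfst]
  have hmap : (∫ w, Real.cos (T w) ∂μ) = ∫ x, Real.cos x ∂(μ.map T) := by
    rw [integral_map hTmeas.aemeasurable
      Real.continuous_cos.measurable.aestronglyMeasurable]
  rw [hmap, hT, hμ.2 (yi - yj), integral_cos_gaussianReal_aux]
  have hq : 0 ≤ quadForm Sw (yi - yj) := by
    have h := hS.posSemidef.dotProduct_mulVec_nonneg (yi - yj)
    simpa [dotProduct, Matrix.mulVec, quadForm, Finset.mul_sum, mul_assoc] using h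
  rw [Real.coe_toNNReal _ hq]
  congr 1
  ring
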